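/- If the probability weight of a partition p of {1,...,m} is w(p) ∝ ∏_{cells C} ψ^{(|C|)}(max C) for positive ψ, then the conditional distribution of p given its induced S-path S is uniform on C_S, i.e., equals 1/|C_S| for each p in C_S, where |C_S| = ∏_{j: S_j > S_{j-1}} C(j-1-S_{j-1}, j-S_j). -/

import Mathlib

def IsSPath (m : ℕ) (S : ℕ → ℕ) : Prop :=
  S 0 = 0 ∧ S m = m ∧ ∀ j, 1 ≤ j → j < m → S j ≤ min j (S (j + 1))

def IsPartitionOf (m : ℕ) (P : Finset (Finset ℕ)) : Prop :=
  (∀ C ∈ P, C.Nonempty ∧ C ⊆ Finset.Icc 1 m) ∧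
  (∀ i ∈ Finset.Icc 1 m, ∃! C, C ∈ P ∧ i ∈ C)

def CorrespondsTo (m : ℕ) (S : ℕ → ℕ) (P : Finset (Finset ℕ)) : Prop :=
  IsPartitionOf m P ∧
  (∀ C ∈ P, ∃ j : ℕ, C.max = (j : WithBot ℕ) ∧ S (j - 1) < S j ∧ C.card = S j - S (j - 1)) ∧
  (∀ j ∈ Finset.Icc 1 m, S (j - 1) < S j → ∃ C ∈ P, C.max = (j : WithBot ℕ))

open Finset

def IsGenPart (T A : Finset ℕ) (k : ℕ → ℕ) (P : Finset (Finset ℕ)) : Prop :=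
  (∀ C ∈ P, C.Nonempty ∧ C ⊆ T) ∧
  (∀ i ∈ T, ∃! C, C ∈ P ∧ i ∈ C) ∧
  (∀ C ∈ P, ∃ j ∈ A, C.max = (j : WithBot ℕ) ∧ C.card = k j) ∧
  (∀ j ∈ A, ∃ C ∈ P, C.max = (j : WithBot ℕ))

open scoped Classical in
noncomputable def genClass (T A : Finset ℕ) (k : ℕ → ℕ) : Finset (Finset (Finset ℕ)) :=
  T.powerset.powerset.filter (IsGenPart T A k)

lemma mem_genClass {T A : Finset ℕ} {k : ℕ → ℕ} {P : Finset (Finset ℕ)} :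
    P ∈ genClass T A k ↔ IsGenPart T A k P := by
  classical
  simp only [genClass, mem_filter, mem_powerset, and_iff_right_iff_imp]
  intro h C hC
  simp only [mem_powerset]
  exact (h.1 C hC).2

def cellOf (j : ℕ) (P : Finset (Finset ℕ)) : Finset ℕ :=
  P.sup (fun C => if j ∈ C then C else ∅)

lemma cellOf_eq {j : ℕ} {P : Finset (Finset ℕ)} {C₀ : Finset ℕ}
    (hu : ∃! C, C ∈ P ∧ j ∈ C) (h0 : C₀ ∈ P) (hj : j ∈ C₀) :
    cellOf j P = C₀ := by
  classical
  apply le_antisymm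
  · apply Finset.sup_le
    intro C hC
    by_cases h : j ∈ C
    · have := hu.unique ⟨hC, h⟩ ⟨h0, hj⟩
      subst this; simp [h]
    · simp [h]
  · have := Finset.le_sup (f := fun C => if j ∈ C then C else ∅) h0
    simpa [hj, cellOf] using this

lemma max_insert_of_lt {j : ℕ} {s : Finset ℕ} (hs : ∀ x ∈ s, x < j) :
    (insert j s).max = (j : WithBot ℕ) := by
  rw [Finset.max_insert]
  have : s.max ≤ (j : WithBot ℕ) := by
    apply Finset.max_le
    intro x hx
    exact WithBot.coe_le_coe.mpr (le_of_lt (hs x hx))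
  exact max_eq_left this

lemma weight_const {T A : Finset ℕ} {k : ℕ → ℕ} {P : Finset (Finset ℕ)}
    (hP : P ∈ genClass T A k) (ψ : ℕ → ℕ → ℝ) :
    ∏ C ∈ P, ψ C.card (WithBot.unbotD 0 C.max) = ∏ j ∈ A, ψ (k j) j := by
  obtain ⟨hne, huniq, hmax, hsurj⟩ := mem_genClass.mp hP
  apply Finset.prod_bij (fun C _ => WithBot.unbotD 0 C.max)
  · intro C hC
    obtain ⟨j, hjA, hmC, _⟩ := hmax C hC
    rw [hmC]; exact hjA
  · intro C₁ h₁ C₂ h₂ he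
    obtain ⟨j₁, _, hm₁, _⟩ := hmax C₁ h₁
    obtain ⟨j₂, _, hm₂, _⟩ := hmax C₂ h₂
    rw [hm₁, hm₂] at he
    change j₁ = j₂ at he
    subst he
    have hj1 : j₁ ∈ C₁ := Finset.mem_of_max hm₁
    have hj2 : j₁ ∈ C₂ := Finset.mem_of_max hm₂
    have hjT : j₁ ∈ T := (hne C₁ h₁).2 hj1
    exact (huniq j₁ hjT).unique ⟨h₁, hj1⟩ ⟨h₂, hj2⟩
  · intro j hj
    obtain ⟨C, hC, hmC⟩ := hsurj j hj
    exact ⟨C, hC, by rw [hmC]; rfl⟩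
  · intro C hC
    obtain ⟨j, hjA, hmC, hcard⟩ := hmax C hC
    rw [hmC, hcard]
    rfl

lemma max_eq_of {C : Finset ℕ} {j : ℕ} (hj : j ∈ C) (h : ∀ x ∈ C, x ≤ j) :
    C.max = (j : WithBot ℕ) :=
  le_antisymm (Finset.max_le fun x hx => WithBot.coe_le_coe.mpr (h x hx)) (Finset.le_max hj)

lemma fiber_card {T A : Finset ℕ} {k : ℕ → ℕ} (j₁ : ℕ) (hj₁A : j₁ ∈ A)
    (hmin : ∀ j ∈ A, j₁ ≤ j) (hAT : A ⊆ T)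
    {C : Finset ℕ} (hCT : C ⊆ T) (hj₁C : j₁ ∈ C) (hCle : ∀ x ∈ C, x ≤ j₁)
    (hCcard : C.card = k j₁) :
    ((genClass T A k).filter (fun P => cellOf j₁ P = C)).card
      = (genClass (T \ C) (A.erase j₁) k).card := by
  classical
  have hCmax : C.max = (j₁ : WithBot ℕ) := max_eq_of hj₁C hCle
  refine Finset.card_bij' (fun P _ => P.erase C) (fun Q _ => insert C Q) ?_ ?_ ?_ ?_
  -- forward maps into target
  case refine_1 =>
    intro P hP
    rw [mem_filter] at hP
    obtain ⟨hPg, hcell⟩ := hP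
    obtain ⟨hne, huniq, hmax, hsurj⟩ := mem_genClass.mp hPg
    have hj₁T : j₁ ∈ T := hAT hj₁A
    have hCP : C ∈ P := by
      obtain ⟨C₀, ⟨hC₀P, hj₁C₀⟩, _⟩ := huniq j₁ hj₁T
      have := cellOf_eq (huniq j₁ hj₁T) hC₀P hj₁C₀
      rw [hcell] at this; rw [this]; exact hC₀P
    have hdisj : ∀ D ∈ P, D ≠ C → ∀ x ∈ D, x ∉ C := by
      intro D hD hne' x hxD hxC
      have hxT : x ∈ T := (hne D hD).2 hxD
      exact hne' ((huniq x hxT).unique ⟨hD, hxD⟩ ⟨hCP, hxC⟩)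
    rw [mem_genClass]
    refine ⟨?_, ?_, ?_, ?_⟩
    · intro D hD
      have hDne := (Finset.mem_erase.mp hD).1
      have hDP := (Finset.mem_erase.mp hD).2
      refine ⟨(hne D hDP).1, ?_⟩
      intro x hxD
      rw [Finset.mem_sdiff]
      exact ⟨(hne D hDP).2 hxD, hdisj D hDP hDne x hxD⟩
    · intro i hi
      rw [Finset.mem_sdiff] at hi
      obtain ⟨C₀, ⟨hC₀P, hiC₀⟩, hu⟩ := huniq i hi.1
      have hC₀ne : C₀ ≠ C := fun h => hi.2 (h ▸ hiC₀)
      refine ⟨C₀, ⟨Finset.mem_erase.mpr ⟨hC₀ne, hC₀P⟩, hiC₀⟩, ?_⟩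
      intro D ⟨hD, hiD⟩
      exact hu D ⟨(Finset.mem_erase.mp hD).2, hiD⟩
    · intro D hD
      obtain ⟨hDne, hDP⟩ := Finset.mem_erase.mp hD
      obtain ⟨j, hjA, hmD, hcard⟩ := hmax D hDP
      refine ⟨j, Finset.mem_erase.mpr ⟨?_, hjA⟩, hmD, hcard⟩
      intro h
      subst h
      exact hdisj D hDP hDne j (Finset.mem_of_max hmD) hj₁C
    · intro j hj
      obtain ⟨hjne, hjA⟩ := Finset.mem_erase.mp hj
      obtain ⟨D, hDP, hmD⟩ := hsurj j hjA
      refine ⟨D, Finset.mem_erase.mpr ⟨?_, hDP⟩, hmD⟩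
      intro h
      subst h
      rw [hCmax] at hmD
      exact hjne (by exact_mod_cast hmD.symm)
  -- backward maps into source
  case refine_2 =>
    intro Q hQ
    obtain ⟨hne, huniq, hmax, hsurj⟩ := mem_genClass.mp hQ
    have hCnotQ : C ∉ Q := by
      intro h
      have := (hne C h).2 hj₁C
      rw [Finset.mem_sdiff] at this
      exact this.2 hj₁C
    have hQdisjC : ∀ D ∈ Q, ∀ x ∈ D, x ∉ C := by
      intro D hD x hxD
      have := (hne D hD).2 hxD
      rw [Finset.mem_sdiff] at this
      exact this.2
    have hg : insert C Q ∈ genClass T A k := by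
      rw [mem_genClass]
      refine ⟨?_, ?_, ?_, ?_⟩
      · intro D hD
        rcases Finset.mem_insert.mp hD with h | h
        · subst h; exact ⟨⟨j₁, hj₁C⟩, hCT⟩
        · exact ⟨(hne D h).1, fun x hx => (Finset.mem_sdiff.mp ((hne D h).2 hx)).1⟩
      · intro i hi
        by_cases hiC : i ∈ C
        · refine ⟨C, ⟨Finset.mem_insert_self _ _, hiC⟩, ?_⟩
          intro D ⟨hD, hiD⟩
          rcases Finset.mem_insert.mp hD with h | h
          · exact h
          · exact absurd hiC (hQdisjC D h i hiD)
        · obtain ⟨C₀, ⟨hC₀Q, hiC₀⟩, hu⟩ := huniq i (Finset.mem_sdiff.mpr ⟨hi, hiC⟩)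
          refine ⟨C₀, ⟨Finset.mem_insert_of_mem hC₀Q, hiC₀⟩, ?_⟩
          intro D ⟨hD, hiD⟩
          rcases Finset.mem_insert.mp hD with h | h
          · exact absurd (h ▸ hiD) hiC
          · exact hu D ⟨h, hiD⟩
      · intro D hD
        rcases Finset.mem_insert.mp hD with h | h
        · subst h; exact ⟨j₁, hj₁A, hCmax, hCcard⟩
        · obtain ⟨j, hjA, hmD, hcard⟩ := hmax D h
          exact ⟨j, (Finset.mem_erase.mp hjA).2, hmD, hcard⟩
      · intro j hjA
        by_cases h : j = j₁
        · exact ⟨C, Finset.mem_insert_self _ _, h ▸ hCmax⟩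
        · obtain ⟨D, hDQ, hmD⟩ := hsurj j (Finset.mem_erase.mpr ⟨h, hjA⟩)
          exact ⟨D, Finset.mem_insert_of_mem hDQ, hmD⟩
    rw [mem_filter]
    refine ⟨hg, ?_⟩
    obtain ⟨hne', huniq', _, _⟩ := mem_genClass.mp hg
    exact cellOf_eq (huniq' j₁ (hAT hj₁A)) (Finset.mem_insert_self _ _) hj₁C
  -- left inverse
  case refine_3 =>
    intro P hP
    rw [mem_filter] at hP
    obtain ⟨hPg, hcell⟩ := hP
    obtain ⟨hne, huniq, hmax, hsurj⟩ := mem_genClass.mp hPg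
    have hj₁T : j₁ ∈ T := hAT hj₁A
    have hCP : C ∈ P := by
      obtain ⟨C₀, ⟨hC₀P, hj₁C₀⟩, _⟩ := huniq j₁ hj₁T
      have := cellOf_eq (huniq j₁ hj₁T) hC₀P hj₁C₀
      rw [hcell] at this; rw [this]; exact hC₀P
    exact Finset.insert_erase hCP
  -- right inverse
  case refine_4 =>
    intro Q hQ
    obtain ⟨hne, _, _, _⟩ := mem_genClass.mp hQ
    have hCnotQ : C ∉ Q := by
      intro h
      have := (hne C h).2 hj₁C
      rw [Finset.mem_sdiff] at this
      exact this.2 hj₁C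
    exact Finset.erase_insert hCnotQ

theorem genClass_card : ∀ (n : ℕ) (T A : Finset ℕ) (k : ℕ → ℕ), A.card = n →
    A ⊆ T → (∀ j ∈ A, 1 ≤ k j) → (∑ j ∈ A, k j = T.card) →
    (genClass T A k).card =
      ∏ j ∈ A, Nat.choose ((T.filter (· < j)).card - ∑ j' ∈ A.filter (· < j), k j')
        (k j - 1) := by
  intro n
  induction n with
  | zero =>
    intro T A k hcard hAT hk hsum
    have hA : A = ∅ := Finset.card_eq_zero.mp hcard
    subst hA
    simp only [Finset.sum_empty] at hsum
    have hT : T = ∅ := Finset.card_eq_zero.mp hsum.symm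
    subst hT
    rw [Finset.prod_empty]
    have : genClass ∅ ∅ k = {∅} := by
      ext P
      rw [mem_genClass]
      simp only [Finset.mem_singleton]
      constructor
      · intro ⟨h1, _, _, _⟩
        rw [Finset.eq_empty_iff_forall_notMem]
        intro C hC
        obtain ⟨⟨x, hx⟩, hsub⟩ := h1 C hC
        exact absurd (hsub hx) (Finset.notMem_empty x)
      · rintro rfl
        exact ⟨by simp, by simp, by simp, by simp⟩
    rw [this, Finset.card_singleton]
  | succ n IH =>
    intro T A k hcard hAT hk hsum
    classical
    have hAne : A.Nonempty := Finset.card_pos.mp (by omega)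
    set j₁ := A.min' hAne with hj₁def
    have hj₁A : j₁ ∈ A := A.min'_mem hAne
    have hmin : ∀ j ∈ A, j₁ ≤ j := fun j hj => A.min'_le j hj
    set pool := T.filter (· < j₁) with hpooldef
    set choices := (pool.powersetCard (k j₁ - 1)).image (insert j₁) with hchdef
    have hmemch : ∀ C, C ∈ choices → C ⊆ T ∧ j₁ ∈ C ∧ (∀ x ∈ C, x ≤ j₁) ∧ C.card = k j₁ := by
      intro C hC
      rw [hchdef, Finset.mem_image] at hC
      obtain ⟨s, hs, rfl⟩ := hC
      rw [Finset.mem_powersetCard] at hs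
      obtain ⟨hsub, hscard⟩ := hs
      have hlt : ∀ x ∈ s, x < j₁ := fun x hx => (Finset.mem_filter.mp (hsub hx)).2
      have hj₁s : j₁ ∉ s := fun h => lt_irrefl j₁ (hlt j₁ h)
      refine ⟨?_, Finset.mem_insert_self _ _, ?_, ?_⟩
      · intro x hx
        rcases Finset.mem_insert.mp hx with rfl | h
        · exact hAT hj₁A
        · exact (Finset.mem_filter.mp (hsub h)).1
      · intro x hx
        rcases Finset.mem_insert.mp hx with rfl | h
        · exact le_refl _
        · exact le_of_lt (hlt x h)
      · rw [Finset.card_insert_of_notMem hj₁s, hscard]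
        have := hk j₁ hj₁A
        omega
    have hmap : ∀ P ∈ genClass T A k, cellOf j₁ P ∈ choices := by
      intro P hP
      obtain ⟨hne, huniq, hmax, hsurj⟩ := mem_genClass.mp hP
      have hj₁T : j₁ ∈ T := hAT hj₁A
      obtain ⟨D, hDP, hmD⟩ := hsurj j₁ hj₁A
      have hj₁D : j₁ ∈ D := Finset.mem_of_max hmD
      have hcell : cellOf j₁ P = D := cellOf_eq (huniq j₁ hj₁T) hDP hj₁D
      rw [hcell]
      have hDcard : D.card = k j₁ := by
        obtain ⟨j, hjA, hmD', hcard'⟩ := hmax D hDP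
        rw [hmD] at hmD'
        have : j₁ = j := by exact_mod_cast hmD'
        rw [← this] at hcard'
        exact hcard'
      have hDle : ∀ x ∈ D, x ≤ j₁ := by
        intro x hx
        have := Finset.le_max hx
        rw [hmD] at this
        exact WithBot.coe_le_coe.mp this
      rw [hchdef, Finset.mem_image]
      refine ⟨D.erase j₁, ?_, Finset.insert_erase hj₁D⟩
      rw [Finset.mem_powersetCard]
      constructor
      · intro x hx
        obtain ⟨hxne, hxD⟩ := Finset.mem_erase.mp hx
        rw [hpooldef, Finset.mem_filter]
        exact ⟨(hne D hDP).2 hxD, lt_of_le_of_ne (hDle x hxD) hxne⟩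
      · rw [Finset.card_erase_of_mem hj₁D, hDcard]
    rw [Finset.card_eq_sum_card_fiberwise hmap]
    have hfib : ∀ C ∈ choices,
        ((genClass T A k).filter (fun P => cellOf j₁ P = C)).card =
        ∏ j ∈ A.erase j₁, Nat.choose ((T.filter (· < j)).card - ∑ j' ∈ A.filter (· < j), k j')
          (k j - 1) := by
      intro C hC
      obtain ⟨hCT, hj₁C, hCle, hCcard⟩ := hmemch C hC
      rw [fiber_card j₁ hj₁A hmin hAT hCT hj₁C hCle hCcard]
      have herase_sub : A.erase j₁ ⊆ T \ C := by
        intro j hj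
        obtain ⟨hjne, hjA⟩ := Finset.mem_erase.mp hj
        have hj₁lt : j₁ < j := lt_of_le_of_ne (hmin j hjA) (Ne.symm hjne)
        rw [Finset.mem_sdiff]
        exact ⟨hAT hjA, fun h => absurd (hCle j h) (not_le.mpr hj₁lt)⟩
      have hsum' : ∑ j ∈ A.erase j₁, k j = (T \ C).card := by
        have h1 : k j₁ + ∑ j ∈ A.erase j₁, k j = ∑ j ∈ A, k j := Finset.add_sum_erase A k hj₁A
        have h2 : (T \ C).card = T.card - C.card := Finset.card_sdiff_of_subset hCT
        have h3 : C.card ≤ T.card := Finset.card_le_card hCT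
        omega
      rw [IH (T \ C) (A.erase j₁) k (by rw [Finset.card_erase_of_mem hj₁A, hcard]; omega) herase_sub
        (fun j hj => hk j (Finset.mem_erase.mp hj).2) hsum']
      apply Finset.prod_congr rfl
      intro j hj
      obtain ⟨hjne, hjA⟩ := Finset.mem_erase.mp hj
      have hj₁lt : j₁ < j := lt_of_le_of_ne (hmin j hjA) (Ne.symm hjne)
      have hClt : C ⊆ T.filter (· < j) := by
        intro x hx
        rw [Finset.mem_filter]
        exact ⟨hCT hx, lt_of_le_of_lt (hCle x hx) hj₁lt⟩
      have hset : (T \ C).filter (· < j) = (T.filter (· < j)) \ C := by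
        ext x
        simp only [Finset.mem_filter, Finset.mem_sdiff]
        tauto
      have hcardset : ((T \ C).filter (· < j)).card = (T.filter (· < j)).card - k j₁ := by
        rw [hset, Finset.card_sdiff_of_subset hClt, hCcard]
      have hAfil : A.filter (· < j) = insert j₁ ((A.erase j₁).filter (· < j)) := by
        ext j'
        simp only [Finset.mem_filter, Finset.mem_insert, Finset.mem_erase]
        constructor
        · rintro ⟨hj'A, hj'lt⟩
          by_cases h : j' = j₁
          · exact Or.inl h
          · exact Or.inr ⟨⟨h, hj'A⟩, hj'lt⟩
        · rintro (rfl | ⟨⟨_, hj'A⟩, hj'lt⟩)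
          · exact ⟨hj₁A, hj₁lt⟩
          · exact ⟨hj'A, hj'lt⟩
      have hj₁nf : j₁ ∉ (A.erase j₁).filter (· < j) := by
        simp [Finset.mem_filter]
      have hsumfil : ∑ j' ∈ A.filter (· < j), k j' =
          k j₁ + ∑ j' ∈ (A.erase j₁).filter (· < j), k j' := by
        rw [hAfil, Finset.sum_insert hj₁nf]
      have hkle : k j₁ ≤ (T.filter (· < j)).card := by
        rw [← hCcard]; exact Finset.card_le_card hClt
      rw [hcardset, hsumfil]
      congr 1
      omega
    rw [Finset.sum_congr rfl hfib, Finset.sum_const]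
    have hchcard : choices.card = Nat.choose pool.card (k j₁ - 1) := by
      rw [hchdef, Finset.card_image_of_injOn, Finset.card_powersetCard]
      intro s hs s' hs' he
      rw [Finset.mem_coe, Finset.mem_powersetCard] at hs hs'
      have h1 : j₁ ∉ s := fun h => lt_irrefl j₁ (Finset.mem_filter.mp (hs.1 h)).2
      have h2 : j₁ ∉ s' := fun h => lt_irrefl j₁ (Finset.mem_filter.mp (hs'.1 h)).2
      rw [← Finset.erase_insert h1, ← Finset.erase_insert h2, he]
    rw [hchcard]
    rw [← Finset.mul_prod_erase A _ hj₁A]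
    have hfilj₁ : A.filter (· < j₁) = ∅ := by
      rw [Finset.filter_eq_empty_iff]
      intro j hj
      exact not_lt.mpr (hmin j hj)
    rw [hfilj₁, Finset.sum_empty, Nat.sub_zero, smul_eq_mul]

lemma spath_mono {m : ℕ} {S : ℕ → ℕ} (hS : IsSPath m S) : ∀ i, i < m → S i ≤ S (i + 1) := by
  intro i hi
  rcases Nat.eq_zero_or_pos i with rfl | h
  · rw [hS.1]; exact Nat.zero_le _
  · exact le_trans (hS.2.2 i h hi) (min_le_right _ _)

lemma spath_ub {m : ℕ} {S : ℕ → ℕ} (hS : IsSPath m S) : ∀ j ≤ m, S j ≤ j := by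
  intro j hjm
  rcases Nat.eq_zero_or_pos j with rfl | hj0
  · exact le_of_eq hS.1
  · rcases eq_or_lt_of_le hjm with rfl | hlt
    · exact le_of_eq hS.2.1
    · exact le_trans (hS.2.2 j hj0 hlt) (min_le_left _ _)

lemma spath_telescope {m : ℕ} {S : ℕ → ℕ} (hS : IsSPath m S) :
    ∀ t ≤ m, ∑ j' ∈ ((Finset.Icc 1 m).filter (fun j => S (j - 1) < S j)).filter (· ≤ t),
      (S j' - S (j' - 1)) = S t := by
  classical
  intro t
  induction t with
  | zero =>
    intro _
    have : ((Finset.Icc 1 m).filter (fun j => S (j - 1) < S j)).filter (· ≤ 0) = ∅ := by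
      rw [Finset.filter_eq_empty_iff]
      intro j hj
      have := (Finset.mem_Icc.mp (Finset.mem_filter.mp hj).1).1
      omega
    rw [this, Finset.sum_empty, hS.1]
  | succ t IHt =>
    intro ht
    have htm : t < m := ht
    have hmono := spath_mono hS t htm
    by_cases hasc : S t < S (t + 1)
    · have hmem : t + 1 ∈ (Finset.Icc 1 m).filter (fun j => S (j - 1) < S j) := by
        rw [Finset.mem_filter, Finset.mem_Icc]
        refine ⟨⟨by omega, by omega⟩, ?_⟩
        simpa using hasc
      have hins : ((Finset.Icc 1 m).filter (fun j => S (j - 1) < S j)).filter (· ≤ t + 1) =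
          insert (t + 1) (((Finset.Icc 1 m).filter (fun j => S (j - 1) < S j)).filter (· ≤ t)) := by
        ext j
        simp only [Finset.mem_filter, Finset.mem_insert]
        constructor
        · rintro ⟨hjA, hjle⟩
          rcases eq_or_lt_of_le hjle with h | h
          · exact Or.inl h
          · exact Or.inr ⟨hjA, by omega⟩
        · rintro (rfl | ⟨hjA, hjle⟩)
          · exact ⟨Finset.mem_filter.mp hmem, le_refl _⟩
          · exact ⟨hjA, by omega⟩
      have hnm : t + 1 ∉ ((Finset.Icc 1 m).filter (fun j => S (j - 1) < S j)).filter (· ≤ t) := by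
        simp only [Finset.mem_filter]
        rintro ⟨_, h⟩
        omega
      rw [hins, Finset.sum_insert hnm, IHt (by omega)]
      simp only [Nat.add_sub_cancel]
      omega
    · have heq : S (t + 1) = S t := by omega
      have hins : ((Finset.Icc 1 m).filter (fun j => S (j - 1) < S j)).filter (· ≤ t + 1) =
          ((Finset.Icc 1 m).filter (fun j => S (j - 1) < S j)).filter (· ≤ t) := by
        ext j
        simp only [Finset.mem_filter]
        constructor
        · rintro ⟨⟨hIcc, hascj⟩, hjle⟩
          refine ⟨⟨hIcc, hascj⟩, ?_⟩
          rcases eq_or_lt_of_le hjle with rfl | h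
          · simp only [Nat.add_sub_cancel] at hascj
            omega
          · omega
        · rintro ⟨hjA, hjle⟩
          exact ⟨hjA, by omega⟩
      rw [hins, IHt (by omega), heq]

lemma corr_iff {m : ℕ} {S : ℕ → ℕ} {P : Finset (Finset ℕ)} :
    CorrespondsTo m S P ↔ P ∈ genClass (Finset.Icc 1 m)
      ((Finset.Icc 1 m).filter (fun j => S (j - 1) < S j)) (fun j => S j - S (j - 1)) := by
  rw [mem_genClass]
  constructor
  · rintro ⟨⟨hne, huniq⟩, hmax, hsurj⟩
    refine ⟨hne, huniq, ?_, ?_⟩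
    · intro C hC
      obtain ⟨j, hmC, hasc, hcard⟩ := hmax C hC
      have hjC : j ∈ C := Finset.mem_of_max hmC
      have hjI : j ∈ Finset.Icc 1 m := (hne C hC).2 hjC
      exact ⟨j, Finset.mem_filter.mpr ⟨hjI, hasc⟩, hmC, hcard⟩
    · intro j hj
      obtain ⟨hjI, hasc⟩ := Finset.mem_filter.mp hj
      exact hsurj j hjI hasc
  · rintro ⟨hne, huniq, hmax, hsurj⟩
    refine ⟨⟨hne, huniq⟩, ?_, ?_⟩
    · intro C hC
      obtain ⟨j, hjA, hmC, hcard⟩ := hmax C hC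
      exact ⟨j, hmC, (Finset.mem_filter.mp hjA).2, hcard⟩
    · intro j hjI hasc
      exact hsurj j (Finset.mem_filter.mpr ⟨hjI, hasc⟩)


/-- If the weight of a partition is `w(p) ∝ ∏_{C ∈ p} ψ^{(|C|)}(max C)` with positive `ψ`,
then conditionally on the induced S-path `S`, the partition is uniform on `C_S`:
its conditional probability equals `1/|C_S|` with
`|C_S| = ∏_{j : S_j > S_{j-1}} C(j-1-S_{j-1}, j-S_j)`. -/
theorem conditional_uniform_on_class (m : ℕ) (S : ℕ → ℕ) (hS : IsSPath m S)
    (ψ : ℕ → ℕ → ℝ) (hψ : ∀ k j, 0 < ψ k j)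
    (P : Finset (Finset ℕ)) (hP : CorrespondsTo m S P) :
    (∏ C ∈ P, ψ C.card (WithBot.unbotD 0 C.max)) /
        (∑ᶠ P' ∈ {P' : Finset (Finset ℕ) | CorrespondsTo m S P'},
          ∏ C ∈ P', ψ C.card (WithBot.unbotD 0 C.max)) =
      1 / ∏ j ∈ (Finset.Icc 1 m).filter (fun j => S (j - 1) < S j),
            (Nat.choose (j - 1 - S (j - 1)) (j - S j) : ℝ) := by
  classical
  set A := (Finset.Icc 1 m).filter (fun j => S (j - 1) < S j) with hAdef
  set k : ℕ → ℕ := fun j => S j - S (j - 1) with hkdef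
  have hAT : A ⊆ Finset.Icc 1 m := Finset.filter_subset _ _
  have hk1 : ∀ j ∈ A, 1 ≤ k j := by
    intro j hj
    rw [hAdef] at hj
    have := (Finset.mem_filter.mp hj).2
    simp only [hkdef]
    omega
  have hsumA : ∑ j ∈ A, k j = (Finset.Icc 1 m).card := by
    have h1 : A.filter (· ≤ m) = A := by
      apply Finset.filter_true_of_mem
      intro j hj
      exact (Finset.mem_Icc.mp (hAT hj)).2
    have h2 := spath_telescope hS m le_rfl
    rw [hAdef, hkdef]
    rw [hAdef] at h1
    rw [h1] at h2
    rw [h2, hS.2.1, Nat.card_Icc]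
    omega
  have hcount := genClass_card A.card (Finset.Icc 1 m) A k rfl hAT hk1 hsumA
  have hfactor : ∀ j ∈ A,
      Nat.choose (((Finset.Icc 1 m).filter (· < j)).card - ∑ j' ∈ A.filter (· < j), k j')
        (k j - 1) = Nat.choose (j - 1 - S (j - 1)) (j - S j) := by
    intro j hj
    rw [hAdef] at hj
    obtain ⟨hjI, hasc⟩ := Finset.mem_filter.mp hj
    obtain ⟨hj1, hjm⟩ := Finset.mem_Icc.mp hjI
    have hpool : (Finset.Icc 1 m).filter (· < j) = Finset.Icc 1 (j - 1) := by
      ext x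
      simp only [Finset.mem_filter, Finset.mem_Icc]
      omega
    have hpoolcard : ((Finset.Icc 1 m).filter (· < j)).card = j - 1 := by
      rw [hpool, Nat.card_Icc]
      omega
    have hfil : A.filter (· < j) = A.filter (· ≤ j - 1) := by
      apply Finset.filter_congr
      intro x hx
      have hx1 := (Finset.mem_Icc.mp (hAT hx)).1
      omega
    have hsum := spath_telescope hS (j - 1) (by omega)
    have hub1 := spath_ub hS j hjm
    have hub2 := spath_ub hS (j - 1) (by omega)
    rw [hpoolcard, hfil, hAdef, hkdef]
    beta_reduce
    rw [hsum]
    have h1 : S j - S (j - 1) - 1 ≤ j - 1 - S (j - 1) := by omega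
    have h2 : j - S j = (j - 1 - S (j - 1)) - (S j - S (j - 1) - 1) := by omega
    rw [h2, Nat.choose_symm h1]
  have hcount2 : (genClass (Finset.Icc 1 m) A k).card =
      ∏ j ∈ A, Nat.choose (j - 1 - S (j - 1)) (j - S j) := by
    rw [hcount]
    exact Finset.prod_congr rfl hfactor
  have hclass : {P' : Finset (Finset ℕ) | CorrespondsTo m S P'} =
      ↑(genClass (Finset.Icc 1 m) A k) := by
    ext P'
    rw [Set.mem_setOf_eq, Finset.mem_coe, hAdef, hkdef]
    exact corr_iff
  have hPg : P ∈ genClass (Finset.Icc 1 m) A k := by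
    rw [hAdef, hkdef]; exact corr_iff.mp hP
  have hWnum : ∏ C ∈ P, ψ C.card (WithBot.unbotD 0 C.max) = ∏ j ∈ A, ψ (k j) j :=
    weight_const hPg ψ
  have hsumW : (∑ᶠ P' ∈ {P' : Finset (Finset ℕ) | CorrespondsTo m S P'},
      ∏ C ∈ P', ψ C.card (WithBot.unbotD 0 C.max)) =
      ((genClass (Finset.Icc 1 m) A k).card : ℝ) * ∏ j ∈ A, ψ (k j) j := by
    rw [hclass, finsum_mem_coe_finset]
    rw [Finset.sum_congr rfl (fun P' hP' => weight_const hP' ψ), Finset.sum_const,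
      nsmul_eq_mul]
  have hWpos : 0 < ∏ j ∈ A, ψ (k j) j := Finset.prod_pos (fun j _ => hψ _ _)
  have hcardpos : 0 < (genClass (Finset.Icc 1 m) A k).card := Finset.card_pos.mpr ⟨P, hPg⟩
  rw [hWnum, hsumW]
  have hc : ((genClass (Finset.Icc 1 m) A k).card : ℝ) =
      ∏ j ∈ A, (Nat.choose (j - 1 - S (j - 1)) (j - S j) : ℝ) := by
    rw [hcount2]
    push_cast
    rfl
  rw [hc]
  have hprodpos : 0 < ∏ j ∈ A, (Nat.choose (j - 1 - S (j - 1)) (j - S j) : ℝ) := by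
    rw [← hc]
    exact_mod_cast hcardpos
  rw [hAdef] at hprodpos hWpos ⊢
  field_simp
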